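/- Let 1 < γ < 2, K > 0, 0 < δ < R < ∞. Suppose U is real-analytic on a neighborhood of R, positive on (R-δ, R), satisfies U(R) = 0 and U'(R) ≠ 0, and solves U''(r) + (2/r) U'(r) + K U(r)^{1/(γ-1)} = 0 for all r ∈ (R-δ, R). Then 1/(γ-1) is a positive integer (equivalently, γ/(γ-1) = 1/(γ-1) + 1 is an integer). -/

import Mathlib

open Real Set Filter Topology

/-- If `U` is real-analytic on a neighborhood of `R`, positive on `(R-δ, R)`,
vanishes at `R` with nonzero derivative, and solves the Lane–Emden type equation
`U'' + (2/r)U' + K·U^{1/(γ-1)} = 0` on `(R-δ, R)` with `1 < γ < 2`, `K > 0`,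
then `1/(γ-1)` is a positive integer. -/
theorem analytic_boundary_forces_integer_exponent
    (γ K R δ : ℝ) (U : ℝ → ℝ)
    (hγ1 : 1 < γ) (hγ2 : γ < 2) (hK : 0 < K) (hδ : 0 < δ) (hδR : δ < R)
    (hanal : ∃ ε > 0, ∀ x ∈ Metric.ball R ε, AnalyticAt ℝ U x)
    (hpos : ∀ r ∈ Ioo (R - δ) R, 0 < U r)
    (hU0 : U R = 0) (hU' : deriv U R ≠ 0)
    (hode : ∀ r ∈ Ioo (R - δ) R,
      deriv (deriv U) r + (2/r) * deriv U r + K * U r ^ (1/(γ-1)) = 0) :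
    ∃ n : ℕ, 0 < n ∧ (1/(γ-1) : ℝ) = n := by
  obtain ⟨ε, hε, hball⟩ := hanal
  set p : ℝ := 1 / (γ - 1) with hpdef
  have hγ0 : 0 < γ - 1 := by linarith
  have hp1 : 1 < p := by
    rw [hpdef, lt_div_iff₀ hγ0]; linarith
  have hR0 : (0:ℝ) < R := lt_trans hδ hδR
  -- analyticity of U and its derivatives near R
  have hUs : AnalyticOnNhd ℝ U (Metric.ball R ε) := fun x hx => hball x hx
  have hU's : AnalyticOnNhd ℝ (deriv U) (Metric.ball R ε) := hUs.deriv
  have hU''s : AnalyticOnNhd ℝ (deriv (deriv U)) (Metric.ball R ε) :=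
    hU's.deriv
  have hRmem : R ∈ Metric.ball R ε := Metric.mem_ball_self hε
  set g : ℝ → ℝ := fun r => (-(deriv (deriv U) r + (2/r) * deriv U r)) / K with hgdef
  have hg : AnalyticAt ℝ g R := by
    apply AnalyticAt.div
    · exact ((hU''s R hRmem).add
        ((analyticAt_const.div analyticAt_id hR0.ne').mul (hU's R hRmem))).neg
    · exact analyticAt_const
    · exact hK.ne'
  -- the ODE rewritten: g r = U r ^ p on (R-δ, R)
  have heq : ∀ r ∈ Ioo (R - δ) R, g r = U r ^ p := by
    intro r hr
    have h := hode r hr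
    show (-(deriv (deriv U) r + 2/r * deriv U r)) / K = U r ^ p
    rw [div_eq_iff hK.ne']
    linear_combination -h
  have hIoo : Ioo (R - δ) R ∈ 𝓝[<] R :=
    Ioo_mem_nhdsLT_of_mem ⟨by linarith, le_refl R⟩
  -- the slope of U tends to deriv U R from the left
  have hdU : HasDerivAt U (deriv U R) R := ((hUs R hRmem).differentiableAt).hasDerivAt
  have hslope : Tendsto (fun r => U r / (r - R)) (𝓝[<] R) (𝓝 (deriv U R)) := by
    have h1 := hasDerivAt_iff_tendsto_slope.mp hdU
    have h2 : (𝓝[<] R : Filter ℝ) ≤ 𝓝[≠] R :=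
      nhdsWithin_mono R (fun x hx => ne_of_lt hx)
    refine (h1.mono_left h2).congr' ?_
    filter_upwards [self_mem_nhdsWithin] with r hr
    rw [slope_def_field, hU0, sub_zero]
  have hdUneg : deriv U R < 0 := by
    have hle : deriv U R ≤ 0 := by
      apply le_of_tendsto hslope
      filter_upwards [hIoo] with r hr
      exact (div_neg_of_pos_of_neg (hpos r hr) (by linarith [hr.2])).le
    exact lt_of_le_of_ne hle hU'
  set c : ℝ := -(deriv U R) with hcdef
  have hc : 0 < c := by rw [hcdef]; linarith
  set φ : ℝ → ℝ := fun r => U r / (R - r) with hφdef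
  have hφt : Tendsto φ (𝓝[<] R) (𝓝 c) := by
    have := hslope.neg
    refine this.congr ?_
    intro r
    rw [hφdef]
    simp only
    rw [show R - r = -(r - R) by ring, div_neg]
  -- case on the analytic order of g at R
  rcases eq_or_ne (analyticOrderAt g R) ⊤ with htop | hne
  · exfalso
    have h0 : ∀ᶠ z in 𝓝 R, g z = 0 := analyticOrderAt_eq_top.mp htop
    obtain ⟨r, hg0, hr⟩ :=
      ((h0.filter_mono nhdsWithin_le_nhds).and (Filter.eventually_mem_set.mpr hIoo)).exists
    have := heq r hr
    have hUp : 0 < U r ^ p := Real.rpow_pos_of_pos (hpos r hr) p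
    rw [hg0] at this
    linarith
  obtain ⟨m, hm⟩ := WithTop.ne_top_iff_exists.mp hne
  obtain ⟨w, hw, hwR, hgw⟩ := (hg.analyticOrderAt_eq_natCast (n := m)).mp hm.symm
  -- key eventual identity
  have key : (fun r => (-1:ℝ)^m * w r / (φ r) ^ p) =ᶠ[𝓝[<] R]
      (fun r => (R - r) ^ (p - (m:ℝ))) := by
    filter_upwards [hIoo, hgw.filter_mono nhdsWithin_le_nhds] with r hr hgr
    have htr : 0 < R - r := by linarith [hr.2]
    have hU : 0 < U r := hpos r hr
    have hφ : 0 < φ r := div_pos hU htr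
    have hUeq : U r = φ r * (R - r) := (div_mul_cancel₀ (U r) htr.ne').symm
    show (-1:ℝ)^m * w r / (φ r) ^ p = (R - r) ^ (p - (m:ℝ))
    have e1 : (φ r) ^ p * (R - r) ^ p = (-1:ℝ)^m * (R - r)^m * w r := by
      have e2 : U r ^ p = (φ r) ^ p * (R - r) ^ p := by
        rw [hUeq, Real.mul_rpow hφ.le htr.le]
      have e3 : g r = (-1:ℝ)^m * (R - r)^m * w r := by
        rw [hgr, smul_eq_mul, show r - R = -(R - r) by ring, neg_pow]
      rw [← e2, ← heq r hr, e3]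
    rw [Real.rpow_sub htr, Real.rpow_natCast]
    have hφp : (0:ℝ) < (φ r) ^ p := Real.rpow_pos_of_pos hφ p
    have hpm : (0:ℝ) < (R - r)^m := pow_pos htr m
    rw [div_eq_div_iff hφp.ne' hpm.ne']
    linear_combination -e1
  -- limits
  have hwt : Tendsto w (𝓝[<] R) (𝓝 (w R)) :=
    hw.continuousAt.tendsto.mono_left nhdsWithin_le_nhds
  have hφpt : Tendsto (fun r => (φ r) ^ p) (𝓝[<] R) (𝓝 (c ^ p)) :=
    hφt.rpow_const (Or.inl hc.ne')
  have hcp : (0:ℝ) < c ^ p := Real.rpow_pos_of_pos hc p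
  set Lv : ℝ := (-1:ℝ)^m * w R / c ^ p with hLvdef
  have hLv : Lv ≠ 0 := by
    apply div_ne_zero _ hcp.ne'
    exact mul_ne_zero (pow_ne_zero m (by norm_num)) hwR
  have hRHS : Tendsto (fun r => (-1:ℝ)^m * w r / (φ r) ^ p) (𝓝[<] R) (𝓝 Lv) :=
    ((tendsto_const_nhds.mul hwt).div hφpt hcp.ne')
  have hLHS : Tendsto (fun r => (R - r) ^ (p - (m:ℝ))) (𝓝[<] R) (𝓝 Lv) :=
    hRHS.congr' key
  -- the map r ↦ R - r into 𝓝[>] 0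
  have ht : Tendsto (fun r => R - r) (𝓝[<] R) (𝓝[>] (0:ℝ)) := by
    rw [tendsto_nhdsWithin_iff]
    constructor
    · have h1 : Tendsto (fun r : ℝ => R - r) (𝓝 R) (𝓝 (R - R)) :=
        (continuous_const.sub continuous_id).tendsto R
      simpa using h1.mono_left nhdsWithin_le_nhds
    · filter_upwards [self_mem_nhdsWithin] with r hr
      exact sub_pos.2 (Set.mem_Iio.mp hr)
  have hzero : ∀ q : ℝ, 0 < q →
      Tendsto (fun r => (R - r) ^ q) (𝓝[<] R) (𝓝 0) := by
    intro q hq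
    have h1 : Tendsto (fun t : ℝ => t ^ q) (𝓝 (0:ℝ)) (𝓝 ((0:ℝ) ^ q)) :=
      (Real.continuousAt_rpow_const 0 q (Or.inr hq.le)).tendsto
    rw [Real.zero_rpow hq.ne'] at h1
    exact h1.comp (ht.mono_right nhdsWithin_le_nhds)
  rcases lt_trichotomy (p - (m:ℝ)) 0 with hq | hq | hq
  · -- p < m : reciprocal tends to 0, contradiction
    exfalso
    have h1 : Tendsto (fun r => (R - r) ^ (-(p - (m:ℝ)))) (𝓝[<] R) (𝓝 0) :=
      hzero _ (by linarith)
    have h2 : Tendsto (fun r => ((R - r) ^ (p - (m:ℝ)))⁻¹) (𝓝[<] R) (𝓝 Lv⁻¹) :=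
      hLHS.inv₀ hLv
    have h3 : Tendsto (fun r => ((R - r) ^ (p - (m:ℝ)))⁻¹) (𝓝[<] R) (𝓝 0) := by
      refine h1.congr' ?_
      filter_upwards [hIoo] with r hr
      rw [Real.rpow_neg (by linarith [hr.2] : (0:ℝ) ≤ R - r)]
    have := tendsto_nhds_unique h2 h3
    exact hLv (inv_eq_zero.mp this)
  · -- p = m
    refine ⟨m, ?_, by linarith⟩
    by_contra hm0
    push_neg at hm0
    interval_cases m
    simp at hq
    linarith
  · -- p > m : tends to 0, contradiction
    exfalso
    have := tendsto_nhds_unique hLHS (hzero _ hq)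
    exact hLv this
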